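/- Let b : ℝ^d → ℝ^d be bounded and γ-Hölder continuous with γ ∈ (0,1], and define the Picard-type iterations υ_{0,t}(x) = x and υ_{k,t}(x) = x + ∫_0^t b(υ_{k−1,s}(x)) ds for k ≥ 1. Then for every T > 0 and every k ≥ 0 there exists C > 0 such that for every x ∈ ℝ^d, every solution υ_·(x) ∈ Υ(x) of dυ_t/dt = b(υ_t), υ_0 = x, and every t ∈ [0,T], one has |υ_{k,t}(x) − υ_t(x)| ≤ C t^{1 + γ + γ² + ⋯ + γ^k}. -/

import Mathlib

open MeasureTheory Real Set

/-- `Euc d` is the Euclidean space `ℝ^d`. -/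
abbrev Euc (d : ℕ) := EuclideanSpace ℝ (Fin d)

/-- The Gaussian mollification `b(t,x)` of the drift `b` at scale `t^{1/α}`:
`b(t,x) = (2π)^{-d/2} t^{-d/α} ∫ b(z) exp(-|z-x|²/(2 t^{2/α})) dz` for `t > 0`
(with the natural boundary value `b(x)` for `t ≤ 0`). -/
noncomputable def moll (d : ℕ) (α : ℝ) (b : Euc d → Euc d) (t : ℝ) (x : Euc d) : Euc d :=
  if t ≤ 0 then b x
  else ((2 * Real.pi) ^ (-(d : ℝ) / 2) * t ^ (-(d : ℝ) / α)) •
    ∫ z : Euc d, Real.exp (-‖z - x‖ ^ 2 / (2 * t ^ (2 / α))) • b z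

/-- `IsSol F x0 f` : `f` solves the Cauchy problem `f' (t) = F t (f t)` on `[0,∞)`, `f 0 = x0`. -/
def IsSol (d : ℕ) (F : ℝ → Euc d → Euc d) (x0 : Euc d) (f : ℝ → Euc d) : Prop :=
  f 0 = x0 ∧ ∀ t : ℝ, 0 ≤ t → HasDerivWithinAt f (F t (f t)) (Set.Ici 0) t

/-- The Picard-type iterations `υ_{0,t}(x) = x`,
`υ_{k,t}(x) = x + ∫_0^t b(υ_{k-1,s}(x)) ds`. -/
noncomputable def picard (d : ℕ) (b : Euc d → Euc d) (x : Euc d) : ℕ → ℝ → Euc d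
  | 0 => fun _ => x
  | (k + 1) => fun t => x + ∫ s in (0 : ℝ)..t, b (picard d b x k s)

private lemma cont_of_holder {d : ℕ} {γ C₀ : ℝ} (hγ : 0 < γ) (hC₀ : 0 < C₀)
    (b : Euc d → Euc d) (hb : ∀ x y, ‖b x - b y‖ ≤ C₀ * ‖x - y‖ ^ γ) :
    Continuous b := by
  rw [Metric.continuous_iff]
  intro x ε hε
  refine ⟨(ε / C₀) ^ (1/γ), Real.rpow_pos_of_pos (div_pos hε hC₀) _, fun y hy => ?_⟩
  have h1 : dist (b y) (b x) ≤ C₀ * dist y x ^ γ := by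
    simpa [dist_eq_norm] using hb y x
  calc dist (b y) (b x) ≤ C₀ * dist y x ^ γ := h1
    _ < C₀ * ((ε/C₀)^(1/γ))^γ := by
        have := Real.rpow_lt_rpow dist_nonneg hy hγ
        exact (mul_lt_mul_iff_right₀ hC₀).mpr this
    _ = ε := by
        rw [← Real.rpow_mul (div_pos hε hC₀).le, one_div_mul_cancel hγ.ne',
          Real.rpow_one, mul_div_cancel₀ _ hC₀.ne']

private lemma picard_continuous {d : ℕ} (b : Euc d → Euc d) (hb : Continuous b) (x : Euc d) :
    ∀ k, Continuous (picard d b x k)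
  | 0 => continuous_const
  | (k+1) => by
      have ih := picard_continuous b hb x k
      have : Continuous fun t => ∫ s in (0:ℝ)..t, b (picard d b x k s) :=
        intervalIntegral.continuous_primitive
          (fun a c => ((hb.comp ih).intervalIntegrable a c)) 0
      exact (continuous_const.add this : Continuous fun t => x + ∫ s in (0:ℝ)..t, b (picard d b x k s))

private lemma sol_contOn {d : ℕ} {b : Euc d → Euc d} {x : Euc d} {υ : ℝ → Euc d}
    (h : IsSol d (fun _ z => b z) x υ) : ContinuousOn υ (Ici 0) :=
  fun s hs => (h.2 s hs).continuousWithinAt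

private lemma sol_eq {d : ℕ} {b : Euc d → Euc d} (hb : Continuous b) {x : Euc d} {υ : ℝ → Euc d}
    (h : IsSol d (fun _ z => b z) x υ) {t : ℝ} (ht : 0 ≤ t) :
    υ t - x = ∫ s in (0:ℝ)..t, b (υ s) := by
  have hcont : ContinuousOn υ (Icc 0 t) := (sol_contOn h).mono Icc_subset_Ici_self
  have hder : ∀ s ∈ Ioo (0:ℝ) t, HasDerivWithinAt υ (b (υ s)) (Ioi s) s := fun s hs =>
    (h.2 s hs.1.le).mono (Ioi_subset_Ici_self.trans (Ici_subset_Ici.mpr hs.1.le))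
  have hint : IntervalIntegrable (fun s => b (υ s)) volume 0 t := by
    apply ContinuousOn.intervalIntegrable
    rw [uIcc_of_le ht]
    exact hb.comp_continuousOn hcont
  have := intervalIntegral.integral_eq_sub_of_hasDeriv_right_of_le ht hcont hder hint
  rw [this, h.1]

theorem picard_iteration_error_bound
    (d : ℕ) (hd : 1 ≤ d) (γ C₀ : ℝ)
    (hγ : γ ∈ Set.Ioc (0 : ℝ) 1) (hC₀ : 0 < C₀)
    (b : Euc d → Euc d)
    (hb_bdd : ∀ x, ‖b x‖ ≤ C₀)
    (hb_hol : ∀ x y, ‖b x - b y‖ ≤ C₀ * ‖x - y‖ ^ γ) :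
    ∀ T > (0 : ℝ), ∀ k : ℕ, ∃ C > (0 : ℝ), ∀ x : Euc d,
      ∀ υ : ℝ → Euc d, IsSol d (fun _ z => b z) x υ →
      ∀ t ∈ Set.Icc (0 : ℝ) T,
        ‖picard d b x k t - υ t‖ ≤ C * t ^ (∑ j ∈ Finset.range (k + 1), γ ^ j) := by
  obtain ⟨hγ0, hγ1⟩ := hγ
  have hbc : Continuous b := cont_of_holder hγ0 hC₀ b hb_hol
  intro T hT k
  induction k with
  | zero =>
    refine ⟨C₀, hC₀, fun x υ hυ t ht => ?_⟩
    have heq := sol_eq hbc hυ ht.1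
    have hb1 : ‖υ t - x‖ ≤ C₀ * t := by
      rw [heq]
      have := intervalIntegral.norm_integral_le_of_norm_le_const
        (C := C₀) (a := (0:ℝ)) (b := t) (f := fun s => b (υ s)) (fun s _ => hb_bdd (υ s))
      simpa [abs_of_nonneg ht.1] using this
    simp only [picard, zero_add, Finset.sum_range_one, pow_zero, Real.rpow_one]
    calc ‖x - υ t‖ = ‖υ t - x‖ := by rw [norm_sub_rev]
      _ ≤ C₀ * t := hb1
  | succ k ih =>
    obtain ⟨C, hC, hIH⟩ := ih
    set S : ℝ := ∑ j ∈ Finset.range (k+1), γ ^ j with hS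
    have hS0 : 0 ≤ S := Finset.sum_nonneg fun j _ => pow_nonneg hγ0.le j
    have hγS : 0 ≤ γ * S := mul_nonneg hγ0.le hS0
    have hexp : ∑ j ∈ Finset.range (k+1+1), γ ^ j = γ * S + 1 := by
      rw [hS]; exact geom_sum_succ
    refine ⟨C₀ * C ^ γ, by positivity, fun x υ hυ t ht => ?_⟩
    have hcont_p : Continuous (picard d b x k) := picard_continuous b hbc x k
    have hcontυ : ContinuousOn υ (Icc 0 t) := (sol_contOn hυ).mono Icc_subset_Ici_self
    have hint1 : IntervalIntegrable (fun s => b (picard d b x k s)) volume 0 t :=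
      (hbc.comp hcont_p).intervalIntegrable 0 t
    have hint2 : IntervalIntegrable (fun s => b (υ s)) volume 0 t := by
      apply ContinuousOn.intervalIntegrable
      rw [uIcc_of_le ht.1]
      exact hbc.comp_continuousOn hcontυ
    have heq : picard d b x (k+1) t - υ t
        = ∫ s in (0:ℝ)..t, (b (picard d b x k s) - b (υ s)) := by
      have h1 := sol_eq hbc hυ ht.1
      rw [intervalIntegral.integral_sub hint1 hint2, ← h1]
      show x + (∫ s in (0:ℝ)..t, b (picard d b x k s)) - υ t = _
      abel
    have hbound : ∀ s ∈ Icc (0:ℝ) t, ‖b (picard d b x k s) - b (υ s)‖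
        ≤ C₀ * C ^ γ * s ^ (γ * S) := by
      intro s hs
      have h1 : ‖picard d b x k s - υ s‖ ≤ C * s ^ S :=
        hIH x υ hυ s ⟨hs.1, hs.2.trans ht.2⟩
      calc ‖b (picard d b x k s) - b (υ s)‖
          ≤ C₀ * ‖picard d b x k s - υ s‖ ^ γ := hb_hol _ _
        _ ≤ C₀ * (C * s ^ S) ^ γ := by
            have := Real.rpow_le_rpow (norm_nonneg _) h1 hγ0.le
            exact mul_le_mul_of_nonneg_left this hC₀.le
        _ = C₀ * C ^ γ * s ^ (γ * S) := by
            rw [Real.mul_rpow hC.le (Real.rpow_nonneg hs.1 S),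
              ← Real.rpow_mul hs.1, mul_comm S γ, mul_assoc]
    have hne : γ * S + 1 ≠ 0 := by linarith
    calc ‖picard d b x (k+1) t - υ t‖
        = ‖∫ s in (0:ℝ)..t, (b (picard d b x k s) - b (υ s))‖ := by rw [heq]
      _ ≤ ∫ s in (0:ℝ)..t, ‖b (picard d b x k s) - b (υ s)‖ :=
          intervalIntegral.norm_integral_le_integral_norm ht.1
      _ ≤ ∫ s in (0:ℝ)..t, C₀ * C ^ γ * s ^ (γ * S) := by
          apply intervalIntegral.integral_mono_on ht.1 _ _ hbound
          · exact (hint1.sub hint2).norm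
          · exact (intervalIntegral.intervalIntegrable_rpow (Or.inl hγS)).const_mul _
      _ = C₀ * C ^ γ * ∫ s in (0:ℝ)..t, s ^ (γ * S) := by
          rw [intervalIntegral.integral_const_mul]
      _ = C₀ * C ^ γ * (t ^ (γ*S+1) / (γ*S+1)) := by
          rw [integral_rpow (Or.inl (by linarith))]
          rw [Real.zero_rpow hne, sub_zero]
      _ ≤ C₀ * C ^ γ * t ^ (γ*S+1) := by
          apply mul_le_mul_of_nonneg_left _ (by positivity)
          exact div_le_self (Real.rpow_nonneg ht.1 _) (by linarith)
      _ = C₀ * C ^ γ * t ^ (∑ j ∈ Finset.range (k+1+1), γ ^ j) := by rw [hexp]
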